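/- Let p be a prime and let V be a finite-dimensional vector space over ZMod p with an internal direct sum decomposition V = V1 ⊕ V2 where V1 and V2 both have dimension m ≥ 1. Let H ≤ GL(V) be a subgroup such that: (i) every element of H maps the set {V1, V2} of subspaces to itself; (ii) H acts irreducibly on V (the only H-invariant subspaces of V are 0 and V); and (iii) H has exactly three orbits on V \ {0}. Then (V1 ∪ V2) \ {0} is a single H-orbit. -/
import Mathlib

section aux

variable {p : ℕ} {V : Type*} [AddCommGroup V] [Module (ZMod p) V]
  (H : Subgroup (V ≃ₗ[ZMod p] V))

private def myOrb (v : V) : Set V := {w : V | ∃ g ∈ H, g v = w}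

private lemma myOrb_self (v : V) : v ∈ myOrb H v := ⟨1, H.one_mem, rfl⟩

private lemma myOrb_trans {u v w : V} (h1 : u ∈ myOrb H v) (h2 : w ∈ myOrb H u) :
    w ∈ myOrb H v := by
  obtain ⟨g, hg, rfl⟩ := h1
  obtain ⟨k, hk, rfl⟩ := h2
  exact ⟨k * g, H.mul_mem hk hg, rfl⟩

private lemma myOrb_symm {u v : V} (h : u ∈ myOrb H v) : v ∈ myOrb H u := by
  obtain ⟨g, hg, rfl⟩ := h
  exact ⟨g⁻¹, H.inv_mem hg, g.symm_apply_apply v⟩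

private lemma myOrb_eq {u v : V} (h : u ∈ myOrb H v) : myOrb H u = myOrb H v :=
  Set.ext fun w => ⟨fun hw => myOrb_trans H h hw, fun hw => myOrb_trans H (myOrb_symm H h) hw⟩

end aux

/-- If `H ≤ GL(V)` stabilises `{V₁, V₂}` where `V = V₁ ⊕ V₂` with
`dim V₁ = dim V₂ = m ≥ 1`, acts irreducibly on `V`, and has exactly three orbits on
`V \ {0}`, then `(V₁ ∪ V₂) \ {0}` is a single `H`-orbit. -/
theorem union_diff_zero_is_orbit (p : ℕ) [Fact p.Prime] {V : Type*} [AddCommGroup V]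
    [Module (ZMod p) V] [FiniteDimensional (ZMod p) V] (m : ℕ) (hm : 1 ≤ m)
    (V1 V2 : Submodule (ZMod p) V) (hcompl : IsCompl V1 V2)
    (hd1 : Module.finrank (ZMod p) V1 = m) (hd2 : Module.finrank (ZMod p) V2 = m)
    (H : Subgroup (V ≃ₗ[ZMod p] V))
    (hstab : ∀ g ∈ H,
      (V1.map (g : V →ₗ[ZMod p] V) = V1 ∧ V2.map (g : V →ₗ[ZMod p] V) = V2) ∨
      (V1.map (g : V →ₗ[ZMod p] V) = V2 ∧ V2.map (g : V →ₗ[ZMod p] V) = V1))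
    (hirr : ∀ W : Submodule (ZMod p) V, (∀ g ∈ H, ∀ w ∈ W, g w ∈ W) → W = ⊥ ∨ W = ⊤)
    (horb : {s : Set V | ∃ v : V, v ≠ 0 ∧ s = {w : V | ∃ g ∈ H, g v = w}}.ncard = 3) :
    ∃ v : V, (((V1 : Set V) ∪ (V2 : Set V)) \ {0}) = {w : V | ∃ g ∈ H, g v = w} := by
  classical
  have horb' : {s : Set V | ∃ v : V, v ≠ 0 ∧ s = myOrb H v}.ncard = 3 := horb
  set OS : Set (Set V) := {s : Set V | ∃ v : V, v ≠ 0 ∧ s = myOrb H v} with hOS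
  -- injectivity
  have gzero : ∀ (g : V ≃ₗ[ZMod p] V) (v : V), g v = 0 → v = 0 := by
    intro g v h
    have := congrArg g.symm h
    simpa using this
  -- disjointness of V1, V2
  have hdisj : ∀ x : V, x ∈ V1 → x ∈ V2 → x = 0 := by
    intro x h1 h2
    have hx : x ∈ V1 ⊓ V2 := ⟨h1, h2⟩
    rw [hcompl.inf_eq_bot] at hx
    exact Submodule.mem_bot _ |>.mp hx
  -- unique decomposition
  have huniq : ∀ a1 ∈ V1, ∀ a2 ∈ V2, ∀ b1 ∈ V1, ∀ b2 ∈ V2,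
      a1 + a2 = b1 + b2 → a1 = b1 := by
    intro a1 ha1 a2 ha2 b1 hb1 b2 hb2 heq
    have h1 : a1 - b1 ∈ V1 := sub_mem ha1 hb1
    have h2 : a1 - b1 = b2 - a2 := by
      rw [sub_eq_sub_iff_add_eq_add, heq, add_comm]
    have h3 : a1 - b1 ∈ V2 := h2 ▸ sub_mem hb2 ha2
    have := hdisj _ h1 h3
    exact sub_eq_zero.mp this
  -- invariance of V1 ∪ V2
  have hinv : ∀ g ∈ H, ∀ v : V, (v ∈ V1 ∨ v ∈ V2) → (g v ∈ V1 ∨ g v ∈ V2) := by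
    intro g hg v hv
    rcases hstab g hg with ⟨e1, e2⟩ | ⟨e1, e2⟩ <;> rcases hv with hv | hv
    · exact Or.inl (e1 ▸ ⟨v, hv, rfl⟩)
    · exact Or.inr (e2 ▸ ⟨v, hv, rfl⟩)
    · exact Or.inr (e1 ▸ ⟨v, hv, rfl⟩)
    · exact Or.inl (e2 ▸ ⟨v, hv, rfl⟩)
  have hinv' : ∀ g ∈ H, ∀ v : V, (g v ∈ V1 ∨ g v ∈ V2) → (v ∈ V1 ∨ v ∈ V2) := by
    intro g hg v hv
    have h2 := hinv g⁻¹ (H.inv_mem hg) (g v) hv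
    rwa [show (g⁻¹ : V ≃ₗ[ZMod p] V) (g v) = v from g.symm_apply_apply v] at h2
  -- orbits of elements of S stay inside S
  have hSorb : ∀ a : V, (a ∈ V1 ∨ a ∈ V2) → a ≠ 0 →
      ∀ x ∈ myOrb H a, (x ∈ V1 ∨ x ∈ V2) ∧ x ≠ 0 := by
    rintro a ha hane x ⟨g, hg, rfl⟩
    refine ⟨hinv g hg a ha, fun h => hane (gzero g a h)⟩
  -- orbits of elements outside stay outside
  have hTorb : ∀ a : V, ¬(a ∈ V1 ∨ a ∈ V2) →
      ∀ x ∈ myOrb H a, ¬(x ∈ V1 ∨ x ∈ V2) := by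
    rintro a ha x ⟨g, hg, rfl⟩ hx
    exact ha (hinv' g hg a hx)
  -- V1 ≠ ⊥
  have V1_ne_bot : V1 ≠ ⊥ := by
    intro h
    rw [h, finrank_bot] at hd1
    omega
  -- swap element exists
  obtain ⟨g0, hg0H, hg0a, hg0b⟩ :
      ∃ g ∈ H, V1.map (g : V →ₗ[ZMod p] V) = V2 ∧ V2.map (g : V →ₗ[ZMod p] V) = V1 := by
    by_contra hno
    push_neg at hno
    have hall : ∀ g ∈ H, V1.map (g : V →ₗ[ZMod p] V) = V1 := by
      intro g hg
      rcases hstab g hg with ⟨h1, _⟩ | ⟨h1, h2⟩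
      · exact h1
      · exact absurd h2 (hno g hg h1)
    have hW := hirr V1 (by
      intro g hg w hw
      have : g w ∈ V1.map (g : V →ₗ[ZMod p] V) := ⟨w, hw, rfl⟩
      rwa [hall g hg] at this)
    rcases hW with h | h
    · exact V1_ne_bot h
    · have hb : V2 = ⊥ := by
        have := hcompl.inf_eq_bot
        rw [h] at this
        simpa using this
      rw [hb, finrank_bot] at hd2
      omega
  -- pick v1 ∈ V1 \ {0}
  obtain ⟨v1, hv1, hv1ne⟩ := Submodule.exists_mem_ne_zero_of_ne_bot V1_ne_bot
  set v2 : V := g0 v1 with hv2def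
  have hv2 : v2 ∈ V2 := hg0a ▸ ⟨v1, hv1, rfl⟩
  have hv2ne : v2 ≠ 0 := fun h => hv1ne (gzero g0 v1 h)
  have hv2orb : v2 ∈ myOrb H v1 := ⟨g0, hg0H, rfl⟩
  -- t0 outside V1 ∪ V2
  set t0 : V := v1 + v2 with ht0def
  have ht0 : ¬(t0 ∈ V1 ∨ t0 ∈ V2) := by
    rintro (h | h)
    · have : v2 ∈ V1 := by
        have := sub_mem h hv1
        simpa [ht0def] using this
      exact hv2ne (hdisj _ this hv2)
    · have : v1 ∈ V2 := by
        have := sub_mem h hv2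
        simpa [ht0def, add_sub_cancel_right] using this
      exact hv1ne (hdisj _ hv1 this)
  have ht0ne : t0 ≠ 0 := fun h => ht0 (Or.inl (h ▸ V1.zero_mem))
  refine ⟨v1, Set.Subset.antisymm ?_ ?_⟩
  swap
  · rintro w ⟨g, hg, rfl⟩
    refine ⟨?_, ?_⟩
    · rcases hinv g hg v1 (Or.inl hv1) with h | h
      · exact Or.inl h
      · exact Or.inr h
    · simp only [Set.mem_singleton_iff]
      exact fun h => hv1ne (gzero g v1 h)
  -- hard inclusion
  intro u hu
  obtain ⟨huS, huz⟩ := hu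
  have hune : u ≠ 0 := by simpa using huz
  have huS' : u ∈ V1 ∨ u ∈ V2 := by
    rcases huS with h | h
    · exact Or.inl h
    · exact Or.inr h
  by_contra hunot
  have hunot' : u ∉ myOrb H v1 := hunot
  -- three distinct orbits
  have ho1 : myOrb H v1 ∈ OS := ⟨v1, hv1ne, rfl⟩
  have hou : myOrb H u ∈ OS := ⟨u, hune, rfl⟩
  have ho3 : myOrb H t0 ∈ OS := ⟨t0, ht0ne, rfl⟩
  have hne1u : myOrb H v1 ≠ myOrb H u := by
    intro h
    exact hunot' (h ▸ myOrb_self H u)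
  have hne13 : myOrb H v1 ≠ myOrb H t0 := by
    intro h
    exact ht0 ((hSorb v1 (Or.inl hv1) hv1ne t0 (h ▸ myOrb_self H t0)).1)
  have hneu3 : myOrb H u ≠ myOrb H t0 := by
    intro h
    exact ht0 ((hSorb u huS' hune t0 (h ▸ myOrb_self H t0)).1)
  have hOSfin : OS.Finite := by
    apply Set.finite_of_ncard_ne_zero
    rw [horb']
    norm_num
  -- everything outside V1 ∪ V2 lies in the orbit of t0
  have hT : ∀ w : V, ¬(w ∈ V1 ∨ w ∈ V2) → w ∈ myOrb H t0 := by
    intro w hw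
    by_contra hw3
    have hwne : w ≠ 0 := fun h => hw (Or.inl (h ▸ V1.zero_mem))
    have how : myOrb H w ∈ OS := ⟨w, hwne, rfl⟩
    have hd1' : myOrb H w ≠ myOrb H v1 := by
      intro h
      exact hw (hSorb v1 (Or.inl hv1) hv1ne w (h ▸ myOrb_self H w)).1
    have hd2' : myOrb H w ≠ myOrb H u := by
      intro h
      exact hw (hSorb u huS' hune w (h ▸ myOrb_self H w)).1
    have hd3' : myOrb H w ≠ myOrb H t0 := by
      intro h
      exact hw3 (h ▸ myOrb_self H w)
    have hsub : ({myOrb H w, myOrb H v1, myOrb H u, myOrb H t0} : Set (Set V)) ⊆ OS := by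
      intro s hs
      rcases hs with rfl | rfl | rfl | rfl
      · exact how
      · exact ho1
      · exact hou
      · exact ho3
    have hle := Set.ncard_le_ncard hsub hOSfin
    rw [horb'] at hle
    have h4 : ({myOrb H w, myOrb H v1, myOrb H u, myOrb H t0} : Set (Set V)).ncard = 4 := by
      rw [Set.ncard_insert_of_notMem (by simp [hd1', hd2', hd3']),
        Set.ncard_insert_of_notMem (by simp [hne1u, hne13]),
        Set.ncard_insert_of_notMem (by simp [hneu3]),
        Set.ncard_singleton]
    omega
  -- key claim
  have hkey : ∀ w1 ∈ V1, w1 ≠ 0 → ∀ w2 ∈ V2, w2 ≠ 0 →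
      w1 ∈ myOrb H v1 ∨ w2 ∈ myOrb H v1 := by
    intro w1 hw1 hw1ne w2 hw2 hw2ne
    have hwT : ¬(w1 + w2 ∈ V1 ∨ w1 + w2 ∈ V2) := by
      rintro (h | h)
      · have : w2 ∈ V1 := by
          have := sub_mem h hw1
          simpa using this
        exact hw2ne (hdisj _ this hw2)
      · have : w1 ∈ V2 := by
          have := sub_mem h hw2
          simpa [add_sub_cancel_right] using this
        exact hw1ne (hdisj _ hw1 this)
    obtain ⟨h, hh, hht⟩ := hT (w1 + w2) hwT
    have hsum : h v1 + h v2 = w1 + w2 := by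
      rw [← map_add]
      exact hht
    rcases hstab h hh with ⟨e1, e2⟩ | ⟨e1, e2⟩
    · have ha1 : h v1 ∈ V1 := e1 ▸ ⟨v1, hv1, rfl⟩
      have ha2 : h v2 ∈ V2 := e2 ▸ ⟨v2, hv2, rfl⟩
      exact Or.inl ⟨h, hh, huniq _ ha1 _ ha2 _ hw1 _ hw2 hsum⟩
    · have ha1 : h v1 ∈ V2 := e1 ▸ ⟨v1, hv1, rfl⟩
      have ha2 : h v2 ∈ V1 := e2 ▸ ⟨v2, hv2, rfl⟩
      have hsum' : h v2 + h v1 = w1 + w2 := by rw [add_comm]; exact hsum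
      have heq2 : h v2 = w1 := huniq _ ha2 _ ha1 _ hw1 _ hw2 hsum'
      have hv1w2 : h v1 = w2 := by
        have h' := hsum'
        rw [heq2] at h'
        exact add_left_cancel h'
      exact Or.inr ⟨h, hh, hv1w2⟩
  -- derive contradiction
  have hback : ∀ x : V, g0 x ∈ myOrb H v1 → x ∈ myOrb H v1 := by
    rintro x ⟨h, hh, hhx⟩
    refine ⟨g0⁻¹ * h, H.mul_mem (H.inv_mem hg0H) hh, ?_⟩
    show g0⁻¹ (h v1) = x
    rw [hhx]
    exact g0.symm_apply_apply x
  rcases huS' with hu1 | hu2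
  · have hg0u2 : g0 u ∈ V2 := hg0a ▸ ⟨u, hu1, rfl⟩
    have hg0une : g0 u ≠ 0 := fun h => hune (gzero g0 u h)
    rcases hkey u hu1 hune (g0 u) hg0u2 hg0une with h | h
    · exact hunot' h
    · exact hunot' (hback u h)
  · have hg0u1 : g0 u ∈ V1 := hg0b ▸ ⟨u, hu2, rfl⟩
    have hg0une : g0 u ≠ 0 := fun h => hune (gzero g0 u h)
    rcases hkey (g0 u) hg0u1 hg0une u hu2 hune with h | h
    · exact hunot' (hback u h)
    · exact hunot' h
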